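/- Let T be a bounded linear operator on a Banach space X. Then T is positively expansive if and only if sup_{n∈ℕ} ‖T^n x‖ = ∞ for every nonzero x ∈ X. -/
import Mathlib


/-- a bounded operator `T` on a Banach space is positively expansive
(for every `x` with `‖x‖ = 1` there is `n ∈ ℕ` with `‖T^n x‖ ≥ 2`) if and only if
`sup_{n ∈ ℕ} ‖T^n x‖ = ∞` for every nonzero `x`. -/
theorem positivelyExpansive_iff_sup_eq_top {E : Type*} [NormedAddCommGroup E]
    [NormedSpace ℝ E] [CompleteSpace E] (T : E →L[ℝ] E) :
    (∀ x : E, ‖x‖ = 1 → ∃ n : ℕ, 2 ≤ ‖(T ^ n) x‖) ↔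
      (∀ x : E, x ≠ 0 → ∀ M : ℝ, ∃ n : ℕ, M ≤ ‖(T ^ n) x‖) := by
  constructor
  · intro h
    -- step lemma: for any nonzero x, some power doubles the norm
    have step : ∀ x : E, x ≠ 0 → ∃ n : ℕ, 2 * ‖x‖ ≤ ‖(T ^ n) x‖ := by
      intro x hx
      have hx' : (0:ℝ) < ‖x‖ := norm_pos_iff.mpr hx
      obtain ⟨n, hn⟩ := h ((‖x‖⁻¹) • x) (by
        rw [norm_smul, norm_inv, norm_norm, inv_mul_cancel₀ (ne_of_gt hx')])
      refine ⟨n, ?_⟩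
      have : (T ^ n) ((‖x‖⁻¹) • x) = (‖x‖⁻¹) • (T ^ n) x := by
        simp [map_smul]
      rw [this, norm_smul, norm_inv, norm_norm] at hn
      rw [inv_mul_eq_div, le_div_iff₀ hx'] at hn
      linarith
    intro x hx M
    have hx' : (0:ℝ) < ‖x‖ := norm_pos_iff.mpr hx
    have key : ∀ k : ℕ, ∃ n : ℕ, (2:ℝ)^k * ‖x‖ ≤ ‖(T ^ n) x‖ := by
      intro k
      induction k with
      | zero => exact ⟨0, by simp⟩
      | succ k ih =>
        obtain ⟨n, hn⟩ := ih
        have hpos : (0:ℝ) < (2:ℝ)^k * ‖x‖ := by positivity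
        have hTn : (T ^ n) x ≠ 0 := by
          intro h0
          rw [h0, norm_zero] at hn
          linarith
        obtain ⟨m, hm⟩ := step ((T ^ n) x) hTn
        refine ⟨m + n, ?_⟩
        have : (T ^ (m + n)) x = (T ^ m) ((T ^ n) x) := by
          rw [pow_add]; rfl
        rw [this]
        calc (2:ℝ)^(k+1) * ‖x‖ = 2 * ((2:ℝ)^k * ‖x‖) := by ring
          _ ≤ 2 * ‖(T ^ n) x‖ := by linarith
          _ ≤ ‖(T ^ m) ((T ^ n) x)‖ := hm
    obtain ⟨k, hk⟩ := pow_unbounded_of_one_lt (M / ‖x‖) (one_lt_two (α := ℝ))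
    obtain ⟨n, hn⟩ := key k
    refine ⟨n, ?_⟩
    have : M ≤ (2:ℝ)^k * ‖x‖ := by
      rw [div_lt_iff₀ hx'] at hk
      linarith
    linarith
  · intro h x hx1
    have hx : x ≠ 0 := by
      intro h0; rw [h0, norm_zero] at hx1; norm_num at hx1
    exact h x hx 2
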